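/- Tail truncation bound for the heat-line integral: let q₀ satisfy sup_{x≥0} e^{δ' x}|q₀(x)| < ∞ with δ' > δ > 0, let x,t ≥ c > 0, set h = min(δ, x/(2t)) and L with e^{-L² t} = ε ∈ (0,1). Then the modulus of (L e^{-hx}/(2π)) ∫_{|a|>1} e^{i L a x - (L a + i h)² t} q̂₀(La + ih) da is at most ‖q̂₀(· + ih)‖_∞ · (L e^{-h² t}/(2π)) · ε/(-ln ε). -/

import Mathlib

open MeasureTheory

lemma gauss_tail_Ioi {b : ℝ} (hb : 0 < b) :
    ∫ a in Set.Ioi (1:ℝ), a * Real.exp (-b * a^2) = Real.exp (-b) / (2*b) := by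
  have hderiv : ∀ u ∈ Set.Ici (1:ℝ),
      HasDerivAt (fun a : ℝ => -Real.exp (-b*a^2)/(2*b)) (u * Real.exp (-b*u^2)) u := by
    intro u _
    have h1 : HasDerivAt (fun a : ℝ => -b*a^2) (-b*(2*u^1)) u :=
      (hasDerivAt_pow 2 u).const_mul (-b)
    have h2 := ((h1.exp).neg).div_const (2*b)
    refine h2.congr_deriv ?_
    rw [div_eq_iff (by positivity)]
    ring
  have hint : IntegrableOn (fun a : ℝ => a * Real.exp (-b*a^2)) (Set.Ioi 1) :=
    (integrable_mul_exp_neg_mul_sq hb).integrableOn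
  have htend : Filter.Tendsto (fun a : ℝ => -Real.exp (-b*a^2)/(2*b)) Filter.atTop (nhds 0) := by
    have h0 : Filter.Tendsto (fun a : ℝ => b*a^2) Filter.atTop Filter.atTop :=
      (Filter.tendsto_pow_atTop (two_ne_zero)).const_mul_atTop hb
    have h1 : Filter.Tendsto (fun a : ℝ => -b*a^2) Filter.atTop Filter.atBot := by
      have := Filter.tendsto_neg_atTop_atBot.comp h0
      refine this.congr fun a => by simp [Function.comp]
    have h2 : Filter.Tendsto (fun a : ℝ => Real.exp (-b*a^2)) Filter.atTop (nhds 0) :=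
      Real.tendsto_exp_atBot.comp h1
    simpa using (h2.neg).div_const (2*b)
  have := integral_Ioi_of_hasDerivAt_of_tendsto' hderiv hint htend
  rw [this]
  norm_num
  ring

lemma gauss_tail_abs {b : ℝ} (hb : 0 < b) :
    ∫ a in {a : ℝ | 1 < |a|}, |a| * Real.exp (-b * a^2) = Real.exp (-b) / b := by
  have hSeq : {a : ℝ | 1 < |a|} = Set.Iio (-1) ∪ Set.Ioi 1 := by
    ext a
    simp only [Set.mem_setOf_eq, Set.mem_union, Set.mem_Iio, Set.mem_Ioi, lt_abs]
    constructor
    · rintro (h | h); · exact Or.inr h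
      · exact Or.inl (by linarith)
    · rintro (h | h); · exact Or.inr (by linarith)
      · exact Or.inl h
  have gInt : Integrable (fun a : ℝ => |a| * Real.exp (-b * a^2)) := by
    have := (integrable_mul_exp_neg_mul_sq hb).abs
    simpa [abs_mul, Real.abs_exp] using this
  rw [hSeq, setIntegral_union (Set.Iio_disjoint_Ici (by norm_num) |>.mono_right Set.Ioi_subset_Ici_self)
      measurableSet_Ioi gInt.integrableOn gInt.integrableOn]
  have h1 : ∫ a in Set.Iio (-1:ℝ), |a| * Real.exp (-b * a^2)
      = ∫ a in Set.Ioi (1:ℝ), |a| * Real.exp (-b * a^2) := by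
    rw [setIntegral_congr_set Iio_ae_eq_Iic]
    rw [show ∫ a in Set.Iic (-1:ℝ), |a| * Real.exp (-b * a^2)
        = ∫ a in Set.Iic (-1:ℝ), |(-a)| * Real.exp (-b * (-a)^2) from by
      refine setIntegral_congr_fun measurableSet_Iic fun a _ => by rw [abs_neg]; ring_nf]
    rw [integral_comp_neg_Iic (-1) (fun a => |a| * Real.exp (-b * a^2))]
    norm_num
  have h2 : ∫ a in Set.Ioi (1:ℝ), |a| * Real.exp (-b * a^2)
      = Real.exp (-b) / (2*b) := by
    rw [show ∫ a in Set.Ioi (1:ℝ), |a| * Real.exp (-b * a^2)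
        = ∫ a in Set.Ioi (1:ℝ), a * Real.exp (-b * a^2) from
      setIntegral_congr_fun measurableSet_Ioi fun a ha =>
        by rw [abs_of_pos (lt_trans one_pos ha)]]
    exact gauss_tail_Ioi hb
  rw [h1, h2]
  field_simp
  ring

/-- Tail truncation bound for the heat-line integral `I₁`: with `h = min(δ, x/(2t))`,
`e^{-L² t} = ε ∈ (0,1)` and `C` a bound for `|q̂₀|` on the line `Im k = h`, the tail
of the rescaled integral over `|a| > 1` is bounded by
`C · (L e^{-h² t}/(2π)) · ε/(-ln ε)`. -/
theorem stmt_17 (q₀ : ℝ → ℂ) (qhat : ℂ → ℂ) (δ δ' c x t ε L C : ℝ)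
    (hδ : 0 < δ) (hδ' : δ < δ') (hc : 0 < c) (hx : c ≤ x) (ht : c ≤ t)
    (hε0 : 0 < ε) (hε1 : ε < 1) (hL : 0 < L) (hLε : Real.exp (-L ^ 2 * t) = ε)
    (hmeas : Measurable q₀)
    (hdecay : ∃ M : ℝ, ∀ y : ℝ, 0 ≤ y → Real.exp (δ' * y) * norm (q₀ y) ≤ M)
    (hqhat : ∀ k : ℂ, qhat k = ∫ y in Set.Ici (0 : ℝ),
        Complex.exp (-Complex.I * k * y) * q₀ y)
    (hC : ∀ a : ℝ, norm (qhat ((a : ℂ) + (min δ (x / (2 * t)) : ℝ) * Complex.I)) ≤ C) :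
    norm
        ((L * Real.exp (-(min δ (x / (2 * t))) * x) / (2 * Real.pi))
          * ∫ a in {a : ℝ | 1 < |a|},
              Complex.exp (Complex.I * (L * a) * x
                  - ((L * a : ℝ) + (min δ (x / (2 * t)) : ℝ) * Complex.I) ^ 2 * t)
                * qhat ((L * a : ℝ) + (min δ (x / (2 * t)) : ℝ) * Complex.I))
      ≤ C * (L * Real.exp (-(min δ (x / (2 * t))) ^ 2 * t) / (2 * Real.pi))
          * (ε / (-Real.log ε)) := by
  set h : ℝ := min δ (x / (2 * t)) with hh
  have ht0 : 0 < t := lt_of_lt_of_le hc ht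
  have hx0 : 0 < x := lt_of_lt_of_le hc hx
  have hh0 : 0 ≤ h := le_min hδ.le (by positivity)
  have hhx : h ≤ x / (2 * t) := min_le_right _ _
  have hb : 0 < L ^ 2 * t := by positivity
  set b : ℝ := L ^ 2 * t with hbdef
  have hC0 : 0 ≤ C := le_trans (norm_nonneg _) (hC 0)
  have hSmeas : MeasurableSet {a : ℝ | 1 < |a|} :=
    (isOpen_lt continuous_const continuous_abs).measurableSet
  have hεb : Real.exp (-b) = ε := by rw [← hLε]; congr 1; rw [hbdef]; ring
  have hlog : -Real.log ε = b := by rw [← hLε, Real.log_exp, hbdef]; ring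
  -- pointwise bound
  have key : ∀ a : ℝ, 1 < |a| →
      norm (Complex.exp (Complex.I * (L * a) * x
            - ((L * a : ℝ) + (h : ℝ) * Complex.I) ^ 2 * t)
          * qhat ((L * a : ℝ) + (h : ℝ) * Complex.I))
      ≤ C * Real.exp (h ^ 2 * t) * (|a| * Real.exp (-b * a ^ 2)) := by
    intro a ha
    rw [norm_mul]
    have hz : Complex.I * (L * a) * (x:ℂ) - ((L * a : ℝ) + (h : ℝ) * Complex.I) ^ 2 * (t:ℂ)
        = Complex.ofReal (h^2*t - L^2*a^2*t)
          + Complex.ofReal (L*a*x - 2*L*a*h*t) * Complex.I := by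
      push_cast
      linear_combination (-(h:ℂ)^2*(t:ℂ)) * Complex.I_sq
    rw [hz, Complex.norm_exp]
    have hre : (Complex.ofReal (h^2*t - L^2*a^2*t)
        + Complex.ofReal (L*a*x - 2*L*a*h*t) * Complex.I).re = h^2*t - L^2*a^2*t := by simp [← Complex.ofReal_pow]
    rw [hre]
    have h1 : Real.exp (h^2*t - L^2*a^2*t)
        ≤ Real.exp (h^2*t) * (|a| * Real.exp (-b*a^2)) := by
      rw [show h^2*t - L^2*a^2*t = h^2*t + (-b*a^2) from by rw [hbdef]; ring, Real.exp_add]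
      exact mul_le_mul_of_nonneg_left
        (le_mul_of_one_le_left (Real.exp_pos _).le ha.le) (Real.exp_pos _).le
    calc Real.exp (h^2*t - L^2*a^2*t) * norm (qhat _)
        ≤ (Real.exp (h^2*t) * (|a| * Real.exp (-b*a^2))) * C :=
          mul_le_mul h1 (hC (L*a)) (norm_nonneg _) (by positivity)
      _ = C * Real.exp (h^2*t) * (|a| * Real.exp (-b*a^2)) := by ring
  have gInt : Integrable (fun a : ℝ => |a| * Real.exp (-b * a^2)) := by
    have := (integrable_mul_exp_neg_mul_sq hb).abs
    simpa [abs_mul, Real.abs_exp] using this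
  have hGint : Integrable (fun a : ℝ => C * Real.exp (h^2*t) * (|a| * Real.exp (-b * a^2)))
      (volume.restrict {a : ℝ | 1 < |a|}) :=
    ((gInt.const_mul (C * Real.exp (h^2*t)))).restrict
  have chain : norm (∫ a in {a : ℝ | 1 < |a|},
        Complex.exp (Complex.I * (L * a) * x
            - ((L * a : ℝ) + (h : ℝ) * Complex.I) ^ 2 * t)
          * qhat ((L * a : ℝ) + (h : ℝ) * Complex.I))
      ≤ C * Real.exp (h^2*t) * (ε / b) := by
    refine le_trans (norm_integral_le_integral_norm _) ?_
    refine le_trans (integral_mono_of_nonneg (Filter.Eventually.of_forall fun a => norm_nonneg _)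
      hGint ((ae_restrict_iff' hSmeas).2 (Filter.Eventually.of_forall fun a ha => ?_))) ?_
    · simpa using key a ha
    · rw [MeasureTheory.integral_const_mul, gauss_tail_abs hb, hεb]
  -- rewrite the scalar
  have hs : ((L : ℂ) * (Real.exp (-h * x) : ℝ) / (2 * (Real.pi : ℂ)))
      = ((L * Real.exp (-h * x) / (2 * Real.pi) : ℝ) : ℂ) := by push_cast; ring
  rw [norm_mul, hs, Complex.norm_of_nonneg (by positivity), hlog]
  refine le_trans (mul_le_mul_of_nonneg_left chain (by positivity)) ?_
  have h2t : h * (2 * t) ≤ x := (le_div_iff₀ (by positivity)).mp hhx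
  have hexp : Real.exp (-h*x) * Real.exp (h^2*t) ≤ Real.exp (-h^2*t) := by
    rw [← Real.exp_add]
    apply Real.exp_le_exp.2
    nlinarith [mul_le_mul_of_nonneg_left h2t hh0]
  calc L * Real.exp (-h * x) / (2 * Real.pi) * (C * Real.exp (h^2*t) * (ε / b))
      = (C * (L / (2 * Real.pi)) * (ε / b)) * (Real.exp (-h*x) * Real.exp (h^2*t)) := by ring
    _ ≤ (C * (L / (2 * Real.pi)) * (ε / b)) * Real.exp (-h^2*t) :=
        mul_le_mul_of_nonneg_left hexp
          (mul_nonneg (mul_nonneg hC0 (by positivity)) (by positivity))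
    _ = C * (L * Real.exp (-h^2*t) / (2 * Real.pi)) * (ε / b) := by ring
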